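/- For the election with approval matrix A having rows (1,1,0,0), (1,0,1,0), (1,0,0,1), committee size k = 2, and all weights zero (w^i_ℓ = 0), the point x = (1/2, 1/2, 1/2, 1/2) with y^i_1 = 1 and y^i_2 = 0 for all voters i is an optimal extreme point (vertex) of the LP { Σ_j x_j = 2, Σ_{j ∈ C_i} x_j = y^i_1 + y^i_2 for each i, all variables in [0,1] }; in particular, this LP has a non-integral optimal extreme point. -/
import Mathlib


/-- Feasibility for the LP of the example: three voters with approval sets
`{0,1}, {0,2}, {0,3}` over four candidates, committee size `2`. -/
def Feas (x : Fin 4 → ℝ) (y : Fin 3 → Fin 2 → ℝ) : Prop :=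
  (∀ j, x j ∈ Set.Icc (0 : ℝ) 1) ∧ (∀ i ℓ, y i ℓ ∈ Set.Icc (0 : ℝ) 1) ∧
  (∑ j, x j = 2) ∧ (∀ i : Fin 3, x 0 + x i.succ = y i 0 + y i 1)

/-- The fractional point of the example. -/
noncomputable def px : Fin 4 → ℝ := fun _ => 1 / 2

/-- The `y`-part of the fractional point of the example. -/
def py : Fin 3 → Fin 2 → ℝ := fun _ ℓ => if ℓ = 0 then 1 else 0

lemma conv_one {a b t : ℝ} (ha : a ≤ 1) (hb : b ≤ 1) (ht : 0 < t) (ht1 : t < 1)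
    (h : 1 = t * a + (1 - t) * b) : a = 1 ∧ b = 1 := by
  constructor <;> nlinarith

lemma conv_zero {a b t : ℝ} (ha : 0 ≤ a) (hb : 0 ≤ b) (ht : 0 < t) (ht1 : t < 1)
    (h : 0 = t * a + (1 - t) * b) : a = 0 ∧ b = 0 := by
  constructor <;> nlinarith

lemma feas_rigid {x : Fin 4 → ℝ} {y : Fin 3 → Fin 2 → ℝ} (h : Feas x y)
    (hy : ∀ i, y i 0 = 1 ∧ y i 1 = 0) : x = px := by
  obtain ⟨hx, _, hsum, hrow⟩ := h
  have h0 := hrow 0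
  have h1 := hrow 1
  have h2 := hrow 2
  rw [(hy 0).1, (hy 0).2] at h0
  rw [(hy 1).1, (hy 1).2] at h1
  rw [(hy 2).1, (hy 2).2] at h2
  simp [Fin.sum_univ_four] at hsum
  have hs : (0 : Fin 3).succ = (1 : Fin 4) := rfl
  have hs1 : (1 : Fin 3).succ = (2 : Fin 4) := rfl
  have hs2 : (2 : Fin 3).succ = (3 : Fin 4) := rfl
  rw [hs] at h0; rw [hs1] at h1; rw [hs2] at h2
  funext j
  fin_cases j <;> simp [px] <;> linarith

/-- With all weights zero, the point `x = (1/2,1/2,1/2,1/2)`, `y^i = (1,0)` is a feasible,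
optimal extreme point of the LP, and it is not integral. -/
theorem fractional_optimal_extreme_point :
    Feas px py ∧
    (∀ (x : Fin 4 → ℝ) (y : Fin 3 → Fin 2 → ℝ), Feas x y →
      ∑ i, ∑ ℓ, (0 : ℝ) * y i ℓ ≤ ∑ i, ∑ ℓ, (0 : ℝ) * py i ℓ) ∧
    (∀ (x₁ : Fin 4 → ℝ) (y₁ : Fin 3 → Fin 2 → ℝ) (x₂ : Fin 4 → ℝ) (y₂ : Fin 3 → Fin 2 → ℝ)
      (t : ℝ), Feas x₁ y₁ → Feas x₂ y₂ → 0 < t → t < 1 →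
      (∀ j, px j = t * x₁ j + (1 - t) * x₂ j) →
      (∀ i ℓ, py i ℓ = t * y₁ i ℓ + (1 - t) * y₂ i ℓ) →
      x₁ = x₂ ∧ y₁ = y₂) ∧
    (∃ j, px j ≠ 0 ∧ px j ≠ 1) := by
  refine ⟨?_, ?_, ?_, ?_⟩
  · refine ⟨fun j => ?_, fun i ℓ => ?_, ?_, fun i => ?_⟩
    · simp [px]; norm_num
    · fin_cases ℓ <;> simp [py]
    · simp [Fin.sum_univ_four, px]; norm_num
    · simp [px, py]; norm_num
  · intro x y _
    simp
  · intro x₁ y₁ x₂ y₂ t h₁ h₂ ht ht1 hx hy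
    have hy1 : ∀ i, y₁ i 0 = 1 ∧ y₁ i 1 = 0 := by
      intro i
      have h0 := hy i 0
      have h1 := hy i 1
      simp [py] at h0 h1
      exact ⟨(conv_one (h₁.2.1 i 0).2 (h₂.2.1 i 0).2 ht ht1 h0).1,
        (conv_zero (h₁.2.1 i 1).1 (h₂.2.1 i 1).1 ht ht1 h1).1⟩
    have hy2 : ∀ i, y₂ i 0 = 1 ∧ y₂ i 1 = 0 := by
      intro i
      have h0 := hy i 0
      have h1 := hy i 1
      simp [py] at h0 h1
      exact ⟨(conv_one (h₁.2.1 i 0).2 (h₂.2.1 i 0).2 ht ht1 h0).2,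
        (conv_zero (h₁.2.1 i 1).1 (h₂.2.1 i 1).1 ht ht1 h1).2⟩
    have e1 : x₁ = px := feas_rigid h₁ hy1
    have e2 : x₂ = px := feas_rigid h₂ hy2
    refine ⟨e1.trans e2.symm, ?_⟩
    funext i ℓ
    fin_cases ℓ
    · exact (hy1 i).1.trans (hy2 i).1.symm
    · exact (hy1 i).2.trans (hy2 i).2.symm
  · exact ⟨0, by norm_num [px]⟩
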